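/- Let F', F'' be selfadjoint contractions on a Hilbert space K and N : M → K bounded with F' - F'' = 2NN*. Set G = (F'+F'')/2. Then for every z ∈ ℂ \ ((-∞,-1] ∪ [1,∞)), (I_M - z N*(I_K - zG)⁻¹N)⁻¹ = I_M + z N*(I_K - zF')⁻¹N. -/
import Mathlib

open ContinuousLinearMap

/-- If `F' - F'' = 2NN*` with `F', F''` selfadjoint contractions and `G = (F'+F'')/2`,
then for `z ∈ ℂ \ ((-∞,-1] ∪ [1,∞))` one has
`(I - z N*(I - zG)⁻¹N)⁻¹ = I + z N*(I - zF')⁻¹N`. -/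
theorem stmt_5 {M K : Type*} [NormedAddCommGroup M] [InnerProductSpace ℂ M] [CompleteSpace M]
    [NormedAddCommGroup K] [InnerProductSpace ℂ K] [CompleteSpace K]
    (F' F'' : K →L[ℂ] K) (hF'sa : IsSelfAdjoint F') (hF''sa : IsSelfAdjoint F'')
    (hF'c : ‖F'‖ ≤ 1) (hF''c : ‖F''‖ ≤ 1)
    (N : M →L[ℂ] K) (hdiff : F' - F'' = (2 : ℂ) • (N ∘L N.adjoint))
    (G : K →L[ℂ] K) (hG : G = ((1 : ℂ) / 2) • (F' + F''))
    (z : ℂ) (hz : ¬(z.im = 0 ∧ 1 ≤ |z.re|))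
    (RG RF : K →L[ℂ] K)
    (hRG1 : (1 - z • G) ∘L RG = 1) (hRG2 : RG ∘L (1 - z • G) = 1)
    (hRF1 : (1 - z • F') ∘L RF = 1) (hRF2 : RF ∘L (1 - z • F') = 1) :
    (1 - z • (N.adjoint ∘L RG ∘L N)) ∘L (1 + z • (N.adjoint ∘L RF ∘L N)) = 1 ∧
    (1 + z • (N.adjoint ∘L RF ∘L N)) ∘L (1 - z • (N.adjoint ∘L RG ∘L N)) = 1 := by
  set A := N.adjoint with hA
  set P : K →L[ℂ] K := N ∘L A with hPdef
  have hP : F' - G = P := by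
    rw [hG]
    have : F' - (1 / 2 : ℂ) • (F' + F'') = (1 / 2 : ℂ) • (F' - F'') := by module
    rw [this, hdiff, smul_smul]
    norm_num
  have hsub : (1 - z • G) - (1 - z • F') = z • P := by
    have : (1 - z • G) - (1 - z • F') = z • (F' - G) := by module
    rw [this, hP]
  have hkey1 : RF - RG = z • (RG ∘L (P ∘L RF)) := by
    have e1 : RG ∘L ((1 - z • G) ∘L RF) = RF := by
      rw [← comp_assoc, hRG2, one_def, id_comp]
    have e2 : RG ∘L ((1 - z • F') ∘L RF) = RG := by
      rw [hRF1, one_def, comp_id]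
    calc RF - RG = RG ∘L ((1 - z • G) ∘L RF) - RG ∘L ((1 - z • F') ∘L RF) := by
          rw [e1, e2]
      _ = RG ∘L ((((1 - z • G) - (1 - z • F')) ∘L RF)) := by
          rw [← comp_sub, ← sub_comp]
      _ = z • (RG ∘L (P ∘L RF)) := by rw [hsub, smul_comp, comp_smul]
  have hkey2 : RF - RG = z • (RF ∘L (P ∘L RG)) := by
    have e1 : RF ∘L ((1 - z • G) ∘L RG) = RF := by
      rw [hRG1, one_def, comp_id]
    have e2 : RF ∘L ((1 - z • F') ∘L RG) = RG := by
      rw [← comp_assoc, hRF2, one_def, id_comp]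
    calc RF - RG = RF ∘L ((1 - z • G) ∘L RG) - RF ∘L ((1 - z • F') ∘L RG) := by
          rw [e1, e2]
      _ = RF ∘L ((((1 - z • G) - (1 - z • F')) ∘L RG)) := by
          rw [← comp_sub, ← sub_comp]
      _ = z • (RF ∘L (P ∘L RG)) := by rw [hsub, smul_comp, comp_smul]
  constructor
  · have expand : (1 - z • (A ∘L RG ∘L N)) ∘L (1 + z • (A ∘L RF ∘L N)) =
        1 + z • (A ∘L ((RF - RG) ∘L N))
          - (z * z) • (A ∘L (RG ∘L (N ∘L (A ∘L (RF ∘L N))))) := by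
      simp only [comp_add, add_comp, comp_sub, sub_comp, smul_comp, comp_smul, one_def,
        id_comp, comp_id, comp_assoc, sub_comp]
      module
    rw [expand, hkey1]
    simp only [smul_comp, comp_smul, comp_assoc, smul_smul, hPdef]
    module
  · have expand : (1 + z • (A ∘L RF ∘L N)) ∘L (1 - z • (A ∘L RG ∘L N)) =
        1 + z • (A ∘L ((RF - RG) ∘L N))
          - (z * z) • (A ∘L (RF ∘L (N ∘L (A ∘L (RG ∘L N))))) := by
      simp only [comp_add, add_comp, comp_sub, sub_comp, smul_comp, comp_smul, one_def,
        id_comp, comp_id, comp_assoc, sub_comp]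
      module
    rw [expand, hkey2]
    simp only [smul_comp, comp_smul, comp_assoc, smul_smul, hPdef]
    module
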